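/- Let $X$ be a Banach space, $T: X \to X$ nonexpansive with $Tx = x$, $f: [0,\infty) \to X$ continuous with $\|f(t)\| \leq \epsilon(t)$ for a continuous function $\epsilon$, and let $u$ solve $u'(t) + (I-T)u(t) = f(t)$, $u(0) = x_0$. Then $\theta(t) = \frac12\|u(t)-x\|^2$ satisfies the differential inequality $\frac{d}{dt}\sqrt{2\theta(t)+1} \leq \epsilon(t)$ (wherever the derivative exists), and hence $t \mapsto \sqrt{\|u(t)-x\|^2+1} + \int_t^\infty \epsilon(s)\,ds$ is nonincreasing when $\int_0^\infty \epsilon < \infty$; in particular $\lim_{t\to\infty}\|u(t)-x\|$ exists. -/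

import Mathlib

open Filter MeasureTheory

section Aux
open Set intervalIntegral


theorem aux_key {X : Type*} [NormedAddCommGroup X] [NormedSpace ℝ X]
    (T : X → X) (hT : ∀ x y : X, ‖T x - T y‖ ≤ ‖x - y‖)
    (x : X) (hx : T x = x)
    (f : ℝ → X) (ε : ℝ → ℝ) (hε : Continuous ε)
    (hfε : ∀ t ∈ Set.Ici (0:ℝ), ‖f t‖ ≤ ε t)
    (u : ℝ → X)
    (hu : ∀ t ∈ Set.Ici (0:ℝ), HasDerivAt u (f t - (u t - T (u t))) t)
    (a b : ℝ) (ha : 0 ≤ a) (hab : a ≤ b) :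
    ‖u b - x‖ ≤ ‖u a - x‖ + ∫ s in a..b, ε s := by
  set c := ‖u a - x‖ with hc
  have hεi : IntervalIntegrable ε volume a b := hε.intervalIntegrable a b
  -- for every δ > 0
  have Hδ : ∀ δ : ℝ, 0 < δ → ‖u b - x‖ ≤ c + δ + ((∫ s in a..b, ε s) + δ * (b - a)) := by
    intro δ hδ
    set w : ℝ → X := fun t => Real.exp t • (u t - x) with hw
    set B : ℝ → ℝ := fun t => Real.exp t * (c + δ + ∫ s in a..t, (ε s + δ)) with hB
    set B' : ℝ → ℝ := fun t => B t + Real.exp t * (ε t + δ) with hB'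
    have hεδc : Continuous (fun s => ε s + δ) := hε.add continuous_const
    have hBd : ∀ t, HasDerivAt B (B' t) t := by
      intro t
      have hint : HasDerivAt (fun r => ∫ s in a..r, (ε s + δ)) (ε t + δ) t :=
        integral_hasDerivAt_right (hεδc.intervalIntegrable a t)
          hεδc.aestronglyMeasurable.stronglyMeasurableAtFilter hεδc.continuousAt
      have hG : HasDerivAt (fun r => c + δ + ∫ s in a..r, (ε s + δ)) (ε t + δ) t :=
        hint.const_add _
      have := (Real.hasDerivAt_exp t).mul hG
      convert this using 1
      try simp only [hB', hB]
      try ring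
      all_goals rfl
    have hw' : ∀ t ∈ Ico a b, HasDerivWithinAt w
        (Real.exp t • (f t + (T (u t) - x))) (Ici t) t := by
      intro t ht
      have ht0 : (0:ℝ) ≤ t := le_trans ha ht.1
      have h1 : HasDerivAt (fun s => u s - x) (f t - (u t - T (u t))) t :=
        (hu t ht0).sub_const x
      have h2 := (Real.hasDerivAt_exp t).smul h1
      have h3 : HasDerivAt w (Real.exp t • (f t + (T (u t) - x))) t := by
        convert h2 using 1
        rfl
        rw [← smul_add]
        congr 1
        abel
      exact h3.hasDerivWithinAt
    have hwc : ContinuousOn w (Icc a b) := by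
      intro t ht
      have ht0 : (0:ℝ) ≤ t := le_trans ha ht.1
      exact (Real.continuous_exp.continuousAt.smul
        ((hu t ht0).continuousAt.sub continuousAt_const)).continuousWithinAt
    have hwa : ‖w a‖ ≤ B a := by
      simp only [hw, hB, intervalIntegral.integral_same, add_zero, norm_smul,
        Real.norm_eq_abs, abs_of_pos (Real.exp_pos a)]
      have := Real.exp_pos a
      nlinarith [norm_nonneg (u a - x)]
    have bound : ∀ t ∈ Ico a b, ‖w t‖ = B t →
        ‖Real.exp t • (f t + (T (u t) - x))‖ < B' t := by
      intro t ht heq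
      have ht0 : (0:ℝ) ≤ t := le_trans ha ht.1
      have h1 : ‖f t + (T (u t) - x)‖ ≤ ε t + ‖u t - x‖ := by
        calc ‖f t + (T (u t) - x)‖ ≤ ‖f t‖ + ‖T (u t) - x‖ := norm_add_le _ _
        _ ≤ ε t + ‖u t - x‖ := by
            have : ‖T (u t) - x‖ ≤ ‖u t - x‖ := by
              simpa [hx] using hT (u t) x
            exact add_le_add (hfε t ht0) this
      have h2 : ‖w t‖ = Real.exp t * ‖u t - x‖ := by
        simp [hw, norm_smul, Real.norm_eq_abs, abs_of_pos (Real.exp_pos t)]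
      have h3 : ‖Real.exp t • (f t + (T (u t) - x))‖ ≤ Real.exp t * ε t + B t := by
        rw [norm_smul, Real.norm_eq_abs, abs_of_pos (Real.exp_pos t), ← heq, h2]
        nlinarith [Real.exp_pos t]
      have : 0 < Real.exp t * δ := by positivity
      simp only [hB']
      nlinarith
    have := image_norm_le_of_norm_deriv_right_lt_deriv_boundary hwc hw' hwa hBd bound
      (right_mem_Icc.2 hab)
    have hwb : ‖w b‖ = Real.exp b * ‖u b - x‖ := by
      simp [hw, norm_smul, Real.norm_eq_abs, abs_of_pos (Real.exp_pos b)]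
    rw [hwb] at this
    simp only [hB] at this
    have hib : (∫ s in a..b, (ε s + δ)) = (∫ s in a..b, ε s) + δ * (b - a) := by
      rw [intervalIntegral.integral_add hεi (intervalIntegrable_const)]
      simp [mul_comm]
    rw [hib] at this
    have hexp : (0:ℝ) < Real.exp b := Real.exp_pos b
    nlinarith [this]
  by_contra hcon
  push_neg at hcon
  set D := ‖u b - x‖ - (c + ∫ s in a..b, ε s) with hD
  have hDpos : 0 < D := by simp only [hD]; linarith
  have hden : (0:ℝ) < 1 + (b - a) := by linarith
  have := Hδ (D / (2 * (1 + (b - a)))) (by positivity)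
  have hkey : D / (2 * (1 + (b - a))) * (1 + (b - a)) = D / 2 := by
    field_simp
  nlinarith [this]

theorem aux_sqrt (c d I : ℝ) (hc : 0 ≤ c) (hd : 0 ≤ d) (hI : 0 ≤ I)
    (h : d ≤ c + I) : Real.sqrt (d ^ 2 + 1) ≤ Real.sqrt (c ^ 2 + 1) + I := by
  have h1 : Real.sqrt (d ^ 2 + 1) ≤ Real.sqrt ((c + I) ^ 2 + 1) := by
    apply Real.sqrt_le_sqrt; nlinarith
  refine h1.trans ?_
  rw [show (c + I) ^ 2 + 1 = (c ^ 2 + 1) + (2 * c * I + I ^ 2) by ring]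
  have hs : Real.sqrt (c ^ 2 + 1) ^ 2 = c ^ 2 + 1 := Real.sq_sqrt (by positivity)
  have hcs : c ≤ Real.sqrt (c ^ 2 + 1) := by
    nlinarith [Real.sqrt_nonneg (c ^ 2 + 1), hs]
  have hrhs : 0 ≤ Real.sqrt (c ^ 2 + 1) + I := by positivity
  rw [show Real.sqrt (c ^ 2 + 1) + I = Real.sqrt ((Real.sqrt (c ^ 2 + 1) + I) ^ 2) by
    rw [Real.sqrt_sq hrhs]]
  apply Real.sqrt_le_sqrt
  nlinarith [Real.sqrt_nonneg (c ^ 2 + 1)]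

end Aux

/-- for a solution `u` of the evolution equation
`u'(t) + (I - T) u(t) = f(t)`, `u(0) = x₀`, with `T` nonexpansive, `T x = x`,
`‖f t‖ ≤ ε t` with `ε` continuous and integrable on `[0,∞)`:
(1) `θ(t) = ½‖u t - x‖²` satisfies `(d/dt)√(2θ(t)+1) ≤ ε t` wherever this derivative
exists; (2) `t ↦ √(‖u t - x‖² + 1) + ∫_t^∞ ε` is nonincreasing on `[0,∞)`; and
(3) `lim_{t→∞} ‖u t - x‖` exists. -/
theorem stmt19 {X : Type*} [NormedAddCommGroup X] [NormedSpace ℝ X] [CompleteSpace X]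
    (T : X → X) (hT : ∀ x y : X, ‖T x - T y‖ ≤ ‖x - y‖)
    (x : X) (hx : T x = x)
    (f : ℝ → X) (hf : Continuous f)
    (ε : ℝ → ℝ) (hε : Continuous ε)
    (hfε : ∀ t ∈ Set.Ici (0:ℝ), ‖f t‖ ≤ ε t)
    (hεint : IntegrableOn ε (Set.Ici 0))
    (x₀ : X) (u : ℝ → X) (hu0 : u 0 = x₀)
    (hu : ∀ t ∈ Set.Ici (0:ℝ), HasDerivAt u (f t - (u t - T (u t))) t) :
    (∀ t ∈ Set.Ici (0:ℝ), ∀ d : ℝ,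
        HasDerivAt (fun s => Real.sqrt (2 * ((1:ℝ)/2 * ‖u s - x‖ ^ 2) + 1)) d t →
        d ≤ ε t)
    ∧ AntitoneOn
        (fun t => Real.sqrt (‖u t - x‖ ^ 2 + 1) + ∫ s in Set.Ioi t, ε s)
        (Set.Ici 0)
    ∧ ∃ l : ℝ, Tendsto (fun t => ‖u t - x‖) atTop (nhds l) := by
  have key : ∀ a b : ℝ, 0 ≤ a → a ≤ b → ‖u b - x‖ ≤ ‖u a - x‖ + ∫ s in a..b, ε s :=
    fun a b => aux_key T hT x hx f ε hε hfε u hu a b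
  have hεnn : ∀ s ∈ Set.Ici (0:ℝ), 0 ≤ ε s := fun s hs => (norm_nonneg (f s)).trans (hfε s hs)
  have key2 : ∀ a b : ℝ, 0 ≤ a → a ≤ b →
      Real.sqrt (‖u b - x‖ ^ 2 + 1) ≤ Real.sqrt (‖u a - x‖ ^ 2 + 1) + ∫ s in a..b, ε s := by
    intro a b ha hab
    have hI : 0 ≤ ∫ s in a..b, ε s :=
      intervalIntegral.integral_nonneg hab (fun s hs => hεnn s (le_trans ha hs.1))
    exact aux_sqrt _ _ _ (norm_nonneg _) (norm_nonneg _) hI (key a b ha hab)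
  have hio : ∀ t : ℝ, 0 ≤ t → IntegrableOn ε (Set.Ioi t) :=
    fun t ht => hεint.mono_set (fun s hs => le_trans ht (le_of_lt hs))
  have hsplit : ∀ a b : ℝ, 0 ≤ a → a ≤ b →
      (∫ s in Set.Ioi a, ε s) = (∫ s in a..b, ε s) + ∫ s in Set.Ioi b, ε s := by
    intro a b ha hab
    rw [intervalIntegral.integral_of_le hab]
    rw [← MeasureTheory.setIntegral_union (Set.Ioc_disjoint_Ioi le_rfl) measurableSet_Ioi
      ((hio a ha).mono_set Set.Ioc_subset_Ioi_self) (hio b (le_trans ha hab))]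
    rw [Set.Ioc_union_Ioi_eq_Ioi hab]
  have hanti : AntitoneOn (fun t => Real.sqrt (‖u t - x‖ ^ 2 + 1) + ∫ s in Set.Ioi t, ε s)
      (Set.Ici 0) := by
    intro a ha b hb hab
    have h1 := key2 a b ha hab
    have h2 := hsplit a b ha hab
    simp only
    linarith
  refine ⟨?_, hanti, ?_⟩
  · intro t ht d hd
    have heq : (fun s => Real.sqrt (2 * ((1:ℝ)/2 * ‖u s - x‖ ^ 2) + 1))
        = fun s => Real.sqrt (‖u s - x‖ ^ 2 + 1) := by
      funext s; congr 1; ring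
    rw [heq] at hd
    have hdw : HasDerivWithinAt (fun s => Real.sqrt (‖u s - x‖ ^ 2 + 1)) d (Set.Ioi t) t :=
      hd.hasDerivWithinAt
    have hIoi : Set.Ioi t \ {t} = Set.Ioi t := by simp
    have hslope1 : Tendsto (slope (fun s => Real.sqrt (‖u s - x‖ ^ 2 + 1)) t)
        (nhdsWithin t (Set.Ioi t)) (nhds d) := by
      have := hasDerivWithinAt_iff_tendsto_slope.1 hdw
      rwa [hIoi] at this
    have hF : HasDerivAt (fun s => ∫ r in t..s, ε r) (ε t) t :=
      intervalIntegral.integral_hasDerivAt_right (hε.intervalIntegrable t t)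
        hε.aestronglyMeasurable.stronglyMeasurableAtFilter hε.continuousAt
    have hslope2 : Tendsto (slope (fun s => ∫ r in t..s, ε r) t)
        (nhdsWithin t (Set.Ioi t)) (nhds (ε t)) := by
      have := hasDerivWithinAt_iff_tendsto_slope.1 (hF.hasDerivWithinAt (s := Set.Ioi t))
      rwa [hIoi] at this
    have hcomp : ∀ᶠ s in nhdsWithin t (Set.Ioi t),
        slope (fun s => Real.sqrt (‖u s - x‖ ^ 2 + 1)) t s
          ≤ slope (fun s => ∫ r in t..s, ε r) t s := by
      filter_upwards [eventually_mem_nhdsWithin] with s hs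
      have hst : t < s := hs
      rw [slope_def_field, slope_def_field]
      have h1 := key2 t s ht (le_of_lt hst)
      have h2 : (∫ r in t..t, ε r) = 0 := intervalIntegral.integral_same
      have hden : (0:ℝ) < s - t := by linarith
      exact (div_le_div_iff_of_pos_right hden).2 (by rw [h2]; linarith)
    exact le_of_tendsto_of_tendsto hslope1 hslope2 hcomp
  · set g : ℝ → ℝ := fun t => Real.sqrt (‖u t - x‖ ^ 2 + 1) with hg
    set τ : ℝ → ℝ := fun t => ∫ s in Set.Ioi t, ε s with hτ
    set G : ℝ → ℝ := fun t => g t + τ t with hG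
    have hGanti : AntitoneOn G (Set.Ici 0) := hanti
    have hH : Antitone (fun t => G (max t 0)) := fun s t hst =>
      hGanti (le_max_right s 0) (le_max_right t 0) (max_le_max hst le_rfl)
    have hτnn : ∀ t : ℝ, 0 ≤ t → 0 ≤ τ t := fun t ht =>
      MeasureTheory.setIntegral_nonneg measurableSet_Ioi
        (fun s hs => hεnn s (le_trans ht (le_of_lt hs)))
    have hbdd : BddBelow (Set.range (fun t => G (max t 0))) := by
      refine ⟨0, ?_⟩
      rintro _ ⟨t, rfl⟩
      exact add_nonneg (Real.sqrt_nonneg _) (hτnn (max t 0) (le_max_right t 0))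
    have hLH := tendsto_atTop_ciInf hH hbdd
    set L := ⨅ t : ℝ, G (max t 0) with hLdef
    have hGL : Tendsto G atTop (nhds L) := by
      refine hLH.congr' ?_
      filter_upwards [eventually_ge_atTop (0:ℝ)] with t ht
      rw [max_eq_left ht]
    have htail0 : Tendsto τ atTop (nhds 0) := by
      have h1 : Tendsto (fun t => ∫ s in (0:ℝ)..t, ε s) atTop
          (nhds (∫ s in Set.Ioi 0, ε s)) :=
        MeasureTheory.intervalIntegral_tendsto_integral_Ioi 0 (hio 0 le_rfl) tendsto_id
      have h2 : Tendsto (fun t => (∫ s in Set.Ioi (0:ℝ), ε s) - ∫ s in (0:ℝ)..t, ε s) atTop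
          (nhds ((∫ s in Set.Ioi (0:ℝ), ε s) - ∫ s in Set.Ioi (0:ℝ), ε s)) :=
        tendsto_const_nhds.sub h1
      rw [sub_self] at h2
      refine h2.congr' ?_
      filter_upwards [eventually_ge_atTop (0:ℝ)] with t ht
      have := hsplit 0 t le_rfl ht
      simp only [hτ]
      linarith
    have hgL : Tendsto g atTop (nhds L) := by
      have h3 := hGL.sub htail0
      rw [sub_zero] at h3
      refine h3.congr (fun t => ?_)
      simp [hG]
    refine ⟨Real.sqrt (L ^ 2 - 1), ?_⟩
    have hcont : Continuous (fun r : ℝ => Real.sqrt (r ^ 2 - 1)) :=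
      Real.continuous_sqrt.comp (by continuity)
    have h3 : Tendsto (fun t => Real.sqrt (g t ^ 2 - 1)) atTop
        (nhds (Real.sqrt (L ^ 2 - 1))) := (hcont.tendsto L).comp hgL
    refine h3.congr (fun t => ?_)
    have hsq : g t ^ 2 = ‖u t - x‖ ^ 2 + 1 := Real.sq_sqrt (by positivity)
    rw [hsq, add_sub_cancel_right]
    exact Real.sqrt_sq (norm_nonneg _)
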